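/- Deflation by exact eigenvectors removes exactly the corresponding eigenvalues and replaces them by zeros: the characteristic polynomial of P A equals X^m · ∏_{j=m+1}^{N} (X − λ_j). In particular the spectrum of P A is {0} ∪ {λ_{m+1}, …, λ_N}. -/
import Mathlib


open Matrix Polynomial


lemma charpoly_similar {n : ℕ} (V B : Matrix (Fin n) (Fin n) ℂ) (hV : IsUnit V) :
    (V⁻¹ * B * V).charpoly = B.charpoly := by
  have hd : IsUnit V.det := (Matrix.isUnit_iff_isUnit_det V).mp hV
  have h1 : V⁻¹ * V = 1 := Matrix.nonsing_inv_mul V hd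
  have h2 : V * V⁻¹ = 1 := Matrix.mul_nonsing_inv V hd
  set W : Matrix (Fin n) (Fin n) ℂ[X] := (C : ℂ →+* ℂ[X]).mapMatrix V with hW
  set W' : Matrix (Fin n) (Fin n) ℂ[X] := (C : ℂ →+* ℂ[X]).mapMatrix V⁻¹ with hW'
  have hWW : W' * W = 1 := by
    rw [hW, hW', ← _root_.map_mul, h1, _root_.map_one]
  have hWW2 : W * W' = 1 := by
    rw [hW, hW', ← _root_.map_mul, h2, _root_.map_one]
  have hcomm : Matrix.scalar (Fin n) (X : ℂ[X]) * W = W * Matrix.scalar (Fin n) (X : ℂ[X]) :=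
    (Matrix.scalar_commute (X : ℂ[X]) (fun r => Commute.all _ _) W).eq
  have key : charmatrix (V⁻¹ * B * V) = W' * charmatrix B * W := by
    simp only [charmatrix, Matrix.mul_sub, Matrix.sub_mul]
    congr 1
    · rw [Matrix.mul_assoc, hcomm, ← Matrix.mul_assoc, hWW, Matrix.one_mul]
    · simp [hW, hW', _root_.map_mul]
  rw [Matrix.charpoly, key, det_mul, det_mul, mul_comm, ← mul_assoc, ← det_mul, hWW2, det_one, one_mul, Matrix.charpoly]

lemma eval_charpoly' {n : ℕ} (B : Matrix (Fin n) (Fin n) ℂ) (z : ℂ) :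
    B.charpoly.eval z = (z • (1 : Matrix (Fin n) (Fin n) ℂ) - B).det := by
  rw [Matrix.charpoly, ← Polynomial.coe_evalRingHom, RingHom.map_det]
  congr 1
  ext i j
  by_cases h : i = j <;>
    simp [charmatrix_apply, Matrix.diagonal_apply, Matrix.one_apply, h, Matrix.map_apply]

theorem deflation_by_exact_eigenvectors_charpoly
    (N m : ℕ) (hN : 0 < N) (hm : 0 < m) (hmN : m ≤ N)
    (A V : Matrix (Fin N) (Fin N) ℂ) (l : Fin N → ℂ)
    (hV : IsUnit V) (hA : A = V * Matrix.diagonal l * V⁻¹)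
    (Z : Matrix (Fin N) (Fin m) ℂ)
    (hZ : Z = Matrix.of fun (i : Fin N) (j : Fin m) => V i (Fin.castLE hmN j))
    (M : Matrix (Fin m) (Fin m) ℂ) (hM : M = Zᴴ * A * Z) (hMinv : IsUnit M)
    (P : Matrix (Fin N) (Fin N) ℂ) (hP : P = 1 - A * Z * M⁻¹ * Zᴴ) :
    (P * A).charpoly =
        X ^ m *
          ∏ j ∈ Finset.univ.filter (fun j : Fin N => m ≤ (j : ℕ)), (X - C (l j)) ∧
      spectrum ℂ (P * A) =
        {0} ∪ {z : ℂ | ∃ j : Fin N, m ≤ (j : ℕ) ∧ z = l j} := by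
  have hd : IsUnit V.det := (Matrix.isUnit_iff_isUnit_det V).mp hV
  have hVV : V⁻¹ * V = 1 := Matrix.nonsing_inv_mul V hd
  have hVV' : V * V⁻¹ = 1 := Matrix.mul_nonsing_inv V hd
  have hMM : M⁻¹ * M = 1 := Matrix.nonsing_inv_mul M ((Matrix.isUnit_iff_isUnit_det M).mp hMinv)
  set E : Matrix (Fin N) (Fin m) ℂ :=
    Matrix.of (fun i j => if i = Fin.castLE hmN j then (1:ℂ) else 0) with hE
  set D : Matrix (Fin m) (Fin m) ℂ := Matrix.diagonal (fun j => l (Fin.castLE hmN j)) with hD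
  have hZE : Z = V * E := by
    rw [hZ, hE]
    ext i j
    simp [Matrix.mul_apply]
  have hcomm : ∀ (i : Fin N) (j : Fin m),
      (Matrix.diagonal l * E) i j = (E * D) i j := by
    intro i j
    by_cases h : i = Fin.castLE hmN j <;>
      simp [hE, hD, Matrix.mul_apply, Matrix.diagonal_apply, h, Finset.sum_ite_eq]
  have hLE : Matrix.diagonal l * E = E * D := by ext i j; exact hcomm i j
  -- simp-friendly reassoc versions
  have e1 : ∀ (B : Matrix (Fin N) (Fin N) ℂ), V⁻¹ * (V * B) = B := by
    intro B; rw [← Matrix.mul_assoc, hVV, Matrix.one_mul]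
  have e3 : ∀ (B : Matrix (Fin m) (Fin N) ℂ),
      Matrix.diagonal l * (E * B) = E * (D * B) := by
    intro B; rw [← Matrix.mul_assoc, hLE, Matrix.mul_assoc]
  have hM' : M = Zᴴ * (V * (Matrix.diagonal l * E)) := by
    rw [hM, hA, hZE]
    simp only [Matrix.mul_assoc]
    rw [← Matrix.mul_assoc V⁻¹ V E, hVV, Matrix.one_mul]
  have hM2 : Zᴴ * (V * (E * D)) = M := by rw [hM', hLE]
  set B : Matrix (Fin N) (Fin N) ℂ :=
    Matrix.diagonal l - E * (D * (M⁻¹ * (Zᴴ * (V * Matrix.diagonal l)))) with hBdef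
  have hB : V⁻¹ * (P * A) * V = B := by
    rw [hP, hA, hZE, hBdef]
    simp only [Matrix.sub_mul, Matrix.mul_sub, Matrix.one_mul, Matrix.mul_one, Matrix.mul_assoc,
      e1, hVV, hLE, e3]
    rw [← hZE]
  set K : Matrix (Fin m) (Fin N) ℂ := D * (M⁻¹ * (Zᴴ * (V * Matrix.diagonal l))) with hK
  have hBE : B * E = 0 := by
    rw [hBdef, Matrix.sub_mul, hLE]
    have : K * E = D := by
      rw [hK]
      simp only [Matrix.mul_assoc, hLE]
      rw [hM2, hMM]
      simp [Matrix.mul_assoc]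
    rw [Matrix.mul_assoc, this, sub_self]
  have hcol : ∀ (i : Fin N) (j : Fin m), B i (Fin.castLE hmN j) = 0 := by
    intro i j
    have h0 : (B * E) i j = 0 := by rw [hBE]; rfl
    rwa [Matrix.mul_apply, Finset.sum_eq_single (Fin.castLE hmN j) (by
        intro k _ hk
        simp [hE, hk, Matrix.of_apply]) (by simp), hE, Matrix.of_apply, if_pos rfl,
      mul_one] at h0
  have hrow : ∀ (i : Fin N) (j : Fin N), m ≤ (i : ℕ) → (E * K) i j = 0 := by
    intro i j hi
    rw [Matrix.mul_apply]
    apply Finset.sum_eq_zero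
    intro k _
    have : i ≠ Fin.castLE hmN k := by
      intro h; rw [h] at hi; exact absurd (Fin.castLE hmN k).isLt (by simpa using Nat.not_lt.mpr hi)
    simp [hE, this]
  have htri : B.BlockTriangular id := by
    intro i j hij
    replace hij : j < i := hij
    by_cases hjm : (j : ℕ) < m
    · exact hcol i ⟨(j : ℕ), hjm⟩
    · have : (E * K) i j = 0 := hrow i j (le_trans (Nat.le_of_not_lt hjm) (Nat.le_of_lt hij))
      rw [hBdef, Matrix.sub_apply, this, sub_zero,
        Matrix.diagonal_apply_ne _ (Fin.ne_of_gt hij)]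
  have hdiag : ∀ i : Fin N, B i i = if (i : ℕ) < m then 0 else l i := by
    intro i
    by_cases hi : (i : ℕ) < m
    · rw [if_pos hi]; exact hcol i ⟨(i : ℕ), hi⟩
    · rw [if_neg hi, hBdef, Matrix.sub_apply, hrow i i (Nat.le_of_not_lt hi), sub_zero,
        Matrix.diagonal_apply_eq]
  have hcard : (Finset.filter (fun i : Fin N => (i : ℕ) < m) Finset.univ).card = m := by
    have heq : Finset.filter (fun i : Fin N => (i : ℕ) < m) Finset.univ
        = Finset.map (Fin.castLEEmb hmN) Finset.univ := by
      ext i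
      simp only [Finset.mem_filter, Finset.mem_univ, true_and, Finset.mem_map]
      constructor
      · intro hi
        first
        | exact ⟨⟨(i : ℕ), hi⟩, Fin.ext rfl⟩
        | exact ⟨⟨(i : ℕ), hi⟩, Finset.mem_univ _, Fin.ext rfl⟩
      · rintro ⟨j, rfl⟩
        simpa using j.isLt
    rw [heq, Finset.card_map, Finset.card_univ, Fintype.card_fin]
  have hBsim : (P * A).charpoly = B.charpoly := by
    rw [← hB, charpoly_similar V (P * A) hV]
  have hcp : (P * A).charpoly =
      X ^ m * ∏ j ∈ Finset.univ.filter (fun j : Fin N => m ≤ (j : ℕ)), (X - C (l j)) := by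
    rw [hBsim, Matrix.charpoly_of_upperTriangular B htri,
      ← Finset.prod_filter_mul_prod_filter_not Finset.univ (fun i : Fin N => (i : ℕ) < m)]
    congr 1
    · rw [Finset.prod_congr rfl (fun i hi => by
        rw [hdiag i, if_pos (Finset.mem_filter.mp hi).2, map_zero, sub_zero]),
        Finset.prod_const, hcard]
    · exact Finset.prod_congr (by ext i; simp [Nat.not_lt]) (fun i hi => by
        rw [hdiag i, if_neg (Nat.not_lt.mpr (Finset.mem_filter.mp hi).2)])
  have hspec : spectrum ℂ (P * A) =
      {0} ∪ {z : ℂ | ∃ j : Fin N, m ≤ (j : ℕ) ∧ z = l j} := by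
    ext z
    rw [spectrum.mem_iff, Algebra.algebraMap_eq_smul_one,
      Matrix.isUnit_iff_isUnit_det, isUnit_iff_ne_zero, not_not,
      ← eval_charpoly', hcp]
    simp only [eval_mul, eval_pow, eval_X, Polynomial.eval_prod, eval_sub, eval_C,
      mul_eq_zero, pow_eq_zero_iff hm.ne', Finset.prod_eq_zero_iff, Finset.mem_filter,
      Finset.mem_univ, true_and, sub_eq_zero, Set.mem_union, Set.mem_singleton_iff,
      Set.mem_setOf_eq]
  exact ⟨hcp, hspec⟩
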